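/- Fix m ≥ 1 and θ ∈ ℝ, and let A = A_{m,θ} be the 2^m × 2^m complex matrix defined below. Then for all x, y ∈ {0,1}^m: (1) the diagonal entry (AᴴA)_{x,x} = 1; (2) the entry (AᴴA)_{x̄,x} = (−1)^{|x|}·(−i)^m·sin^m(θ), where x̄ is the bitwise complement of x and |x| its Hamming weight; and (3) (AᴴA)_{y,x} = 0 whenever y ∉ {x, x̄}. Here Aᴴ denotes the conjugate transpose of A, so (AᴴA)_{y,x} = Σ_z conj(A_{z,y})·A_{z,x}. -/
import Mathlib


open Finset Matrix

/-- The 2×2 matrix `R(φ) = exp(iφX) = [[cos φ, i sin φ],[i sin φ, cos φ]]`,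
with entries indexed by `Bool`. -/
noncomputable def Rc (φ : ℝ) (a b : Bool) : ℂ :=
  if a = b then (Real.cos φ : ℂ) else Complex.I * (Real.sin φ : ℂ)

/-- The `2^m × 2^m` matrix `A_{m,θ}` with entries
`(A_{m,θ})_{y,x} = Π_j R(θ·x_{j−1})_{y_j, x_j}` (indices of `x` cyclic). -/
noncomputable def Amat (m : ℕ) (θ : ℝ) :
    Matrix (Fin m → Bool) (Fin m → Bool) ℂ :=
  fun y x => ∏ j : Fin m,
    Rc (θ * (if x ⟨(j.val + m - 1) % m, by have := j.isLt; exact Nat.mod_lt _ (by omega)⟩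
          then 1 else 0))
      (y j) (x j)

/-- Cyclic predecessor on `Fin m`. -/
def pidx {m : ℕ} (j : Fin m) : Fin m :=
  ⟨(j.val + m - 1) % m, by have := j.isLt; exact Nat.mod_lt _ (by omega)⟩

/-- Cyclic successor on `Fin m`. -/
def sidx {m : ℕ} (j : Fin m) : Fin m :=
  ⟨(j.val + 1) % m, by have := j.isLt; exact Nat.mod_lt _ (by omega)⟩

lemma sidx_pidx {m : ℕ} (j : Fin m) : sidx (pidx j) = j := by
  have hj := j.isLt
  apply Fin.ext
  show ((j.val + m - 1) % m + 1) % m = j.val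
  rw [Nat.mod_add_mod]
  have e : j.val + m - 1 + 1 = j.val + m := by omega
  rw [e, Nat.add_mod_right, Nat.mod_eq_of_lt hj]

lemma pidx_sidx {m : ℕ} (j : Fin m) : pidx (sidx j) = j := by
  have hj := j.isLt
  apply Fin.ext
  show ((j.val + 1) % m + m - 1) % m = j.val
  have e1 : (j.val + 1) % m + m - 1 = (j.val + 1) % m + (m - 1) := by
    have := Nat.mod_lt (j.val + 1) (show 0 < m by omega); omega
  rw [e1, Nat.mod_add_mod]
  have e2 : j.val + 1 + (m - 1) = j.val + m := by omega
  rw [e2, Nat.add_mod_right, Nat.mod_eq_of_lt hj]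

lemma pidx_bijective {m : ℕ} : Function.Bijective (pidx (m := m)) :=
  Function.bijective_iff_has_inverse.mpr ⟨sidx, sidx_pidx, pidx_sidx⟩

lemma Amat_apply (m : ℕ) (θ : ℝ) (y x : Fin m → Bool) :
    Amat m θ y x = ∏ j : Fin m,
      Rc (θ * (if x (pidx j) then 1 else 0)) (y j) (x j) := rfl

lemma Rsum (φ ψ : ℝ) (a b : Bool) :
    ∑ c : Bool, (starRingEnd ℂ) (Rc φ c a) * Rc ψ c b = Rc (ψ - φ) a b := by
  cases a <;> cases b <;>
    simp [Rc, Fintype.sum_bool, Real.cos_sub, Real.sin_sub, Complex.ofReal_sub,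
      Complex.ofReal_mul, _root_.map_mul, Complex.conj_I, Complex.conj_ofReal,
      -Complex.ofReal_cos, -Complex.ofReal_sin] <;> ring_nf <;>
    simp [Complex.I_sq] <;> ring_nf

lemma AhA (m : ℕ) (θ : ℝ) (y x : Fin m → Bool) :
    ((Amat m θ)ᴴ * Amat m θ) y x
      = ∏ j : Fin m,
          Rc (θ * (if x (pidx j) then 1 else 0) - θ * (if y (pidx j) then 1 else 0))
            (y j) (x j) := by
  rw [Matrix.mul_apply]
  simp only [Matrix.conjTranspose_apply, Amat_apply]
  have h1 : ∀ z : Fin m → Bool,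
      star (∏ j : Fin m, Rc (θ * (if y (pidx j) then 1 else 0)) (z j) (y j)) *
        ∏ j : Fin m, Rc (θ * (if x (pidx j) then 1 else 0)) (z j) (x j)
      = ∏ j : Fin m,
          ((starRingEnd ℂ) (Rc (θ * (if y (pidx j) then 1 else 0)) (z j) (y j)) *
            Rc (θ * (if x (pidx j) then 1 else 0)) (z j) (x j)) := by
    intro z
    rw [star_prod, ← Finset.prod_mul_distrib]
    rfl
  simp only [h1]
  rw [← Fintype.prod_sum
    (fun (j : Fin m) (c : Bool) =>
      (starRingEnd ℂ) (Rc (θ * (if y (pidx j) then 1 else 0)) c (y j)) *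
        Rc (θ * (if x (pidx j) then 1 else 0)) c (x j))]
  exact Finset.prod_congr rfl fun j _ => Rsum _ _ _ _

lemma exists_bd {m : ℕ} (x y : Fin m → Bool) (h1 : y ≠ x)
    (h2 : y ≠ fun j => !(x j)) :
    ∃ j, y j ≠ x j ∧ y (pidx j) = x (pidx j) := by
  by_contra hc
  push_neg at hc
  obtain ⟨j0, hj0⟩ := Function.ne_iff.mp h1
  obtain ⟨k0, hk0⟩ := Function.ne_iff.mp h2
  have hk0' : y k0 = x k0 := by
    cases hy : y k0 <;> cases hx : x k0 <;> simp_all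
  have hm0 : 0 < m := j0.pos
  have key : ∀ t : ℕ, y ⟨(k0.val + t) % m, Nat.mod_lt _ hm0⟩
      = x ⟨(k0.val + t) % m, Nat.mod_lt _ hm0⟩ := by
    intro t
    induction t with
    | zero =>
      have hfin : (⟨(k0.val + 0) % m, Nat.mod_lt _ hm0⟩ : Fin m) = k0 :=
        Fin.ext (by simp [Nat.mod_eq_of_lt k0.isLt])
      rw [hfin]; exact hk0'
    | succ t ih =>
      set j : Fin m := ⟨(k0.val + (t + 1)) % m, Nat.mod_lt _ hm0⟩ with hjdef
      have hp : pidx j = ⟨(k0.val + t) % m, Nat.mod_lt _ hm0⟩ := by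
        apply Fin.ext
        show ((k0.val + (t + 1)) % m + m - 1) % m = (k0.val + t) % m
        have e1 : (k0.val + (t + 1)) % m + m - 1
            = (k0.val + (t + 1)) % m + (m - 1) := by
          have := Nat.mod_lt (k0.val + (t + 1)) hm0; omega
        rw [e1, Nat.mod_add_mod]
        have e2 : k0.val + (t + 1) + (m - 1) = k0.val + t + m := by omega
        rw [e2, Nat.add_mod_right]
      by_contra hne
      exact hc j hne (by rw [hp]; exact ih)
  have hk0m := k0.isLt
  have hj0m := j0.isLt
  have hkey := key (m + j0.val - k0.val)
  have he : (k0.val + (m + j0.val - k0.val)) % m = j0.val := by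
    have e : k0.val + (m + j0.val - k0.val) = j0.val + m := by omega
    rw [e, Nat.add_mod_right, Nat.mod_eq_of_lt hj0m]
  have hfin : (⟨(k0.val + (m + j0.val - k0.val)) % m, Nat.mod_lt _ hm0⟩ : Fin m) = j0 :=
    Fin.ext he
  rw [hfin] at hkey
  exact hj0 hkey

theorem stmt12 (m : ℕ) (hm : 1 ≤ m) (θ : ℝ) (x y : Fin m → Bool) :
    ((Amat m θ)ᴴ * Amat m θ) x x = 1 ∧
    ((Amat m θ)ᴴ * Amat m θ) (fun j => !(x j)) x
      = (-1 : ℂ) ^ (∑ i, if x i then 1 else 0 : ℕ) * (-Complex.I) ^ m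
          * (Real.sin θ : ℂ) ^ m ∧
    (y ≠ x → y ≠ (fun j => !(x j)) → ((Amat m θ)ᴴ * Amat m θ) y x = 0) := by
  refine ⟨?_, ?_, ?_⟩
  · rw [AhA]
    apply Finset.prod_eq_one
    intro j _
    simp [Rc, sub_self]
  · rw [AhA]
    have step1 : (∏ j : Fin m,
        Rc (θ * (if x (pidx j) then 1 else 0) - θ * (if (!(x (pidx j))) then 1 else 0))
          (!(x j)) (x j))
        = ∏ j : Fin m, ((-Complex.I * (Real.sin θ : ℂ)) *
            (if x (pidx j) then (-1 : ℂ) else 1)) := by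
      refine Finset.prod_congr rfl fun j _ => ?_
      cases hp : x (pidx j) <;>
        simp [Rc, hp, Real.sin_neg, Complex.ofReal_neg] <;> ring
    rw [step1, Finset.prod_mul_distrib, Finset.prod_const, Finset.card_univ,
      Fintype.card_fin]
    have step2 : (∏ j : Fin m, (if x (pidx j) then (-1 : ℂ) else 1))
        = ∏ j : Fin m, (if x j then (-1 : ℂ) else 1) :=
      pidx_bijective.prod_comp (fun j => if x j then (-1 : ℂ) else 1)
    have step3 : (∏ j : Fin m, (if x j then (-1 : ℂ) else 1))
        = (-1 : ℂ) ^ (∑ i, if x i then 1 else 0 : ℕ) := by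
      rw [← Finset.prod_pow_eq_pow_sum]
      refine Finset.prod_congr rfl fun j _ => ?_
      cases hj : x j <;> simp [hj]
    rw [step2, step3, mul_pow]
    ring
  · intro hne hnc
    obtain ⟨j0, hj1, hj2⟩ := exists_bd x y hne hnc
    rw [AhA]
    apply Finset.prod_eq_zero (Finset.mem_univ j0)
    rw [hj2]
    simp [Rc, hj1, sub_self]
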